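/- (High-pass framelet coefficient bound) For the high-pass framelet transforms at level l, ‖Σ_{r=1}^K W_{r,l} X‖² ≤ C² λ_max 2^{−(l+1)} ‖X‖² for some constant C depending only on the scaling function α̂, where λ_max is the largest eigenvalue of the graph Laplacian; i.e. the energy of high-pass coefficients decays geometrically with the level l. -/

import Mathlib

open Matrix BigOperators

lemma frob_eq_trace {N d : ℕ} (A : Matrix (Fin N) (Fin d) ℝ) :
    ∑ i, ∑ j, (A i j)^2 = Matrix.trace (Aᵀ * A) := by
  simp only [Matrix.trace, Matrix.mul_apply, Matrix.transpose_apply, Matrix.diag_apply, sq]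
  rw [Finset.sum_comm]

lemma frob_orth {N d : ℕ} (U : Matrix (Fin N) (Fin N) ℝ) (h : Uᵀ * U = 1)
    (Z : Matrix (Fin N) (Fin d) ℝ) :
    ∑ i, ∑ j, ((U * Z) i j) ^ 2 = ∑ i, ∑ j, (Z i j) ^ 2 := by
  rw [frob_eq_trace, frob_eq_trace, Matrix.transpose_mul,
    show Zᵀ * Uᵀ * (U * Z) = Zᵀ * (Uᵀ * U) * Z by simp [Matrix.mul_assoc],
    h, Matrix.mul_one]

theorem stmt_14 (N d K : ℕ)
    (U : Matrix (Fin N) (Fin N) ℝ) (hU : U * Uᵀ = 1 ∧ Uᵀ * U = 1)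
    (lam : Fin N → ℝ) (hlamnn : ∀ ℓ, 0 ≤ lam ℓ)
    (lammax : ℝ) (hlammax : ∀ ℓ, lam ℓ ≤ lammax)
    (αhat : ℝ → ℝ) (hαsmooth : ContDiff ℝ 1 αhat) (hα0 : αhat 0 = 1)
    (βhat : Fin K → ℝ → ℝ)
    (h2scale : ∀ (ℓ : Fin N) (l : ℕ), 1 ≤ l →
      ∑ r, βhat r (lam ℓ / 2 ^ l) ^ 2 =
        αhat (lam ℓ / 2 ^ (l + 1)) ^ 2 - αhat (lam ℓ / 2 ^ l) ^ 2)
    (Whigh : Fin K → ℕ → Matrix (Fin N) (Fin N) ℝ)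
    (hWhigh : ∀ r l, Whigh r l =
      U * Matrix.diagonal (fun ℓ => βhat r (lam ℓ / 2 ^ l)) * Uᵀ) :
    ∃ C : ℝ, ∀ l : ℕ, 1 ≤ l → ∀ X : Matrix (Fin N) (Fin d) ℝ,
      (∑ i, ∑ j, ((∑ r, Whigh r l * X) i j) ^ 2) ≤
        C ^ 2 * lammax / 2 ^ (l + 1) * ∑ i, ∑ j, (X i j) ^ 2 := by
  -- the squared scaling function and a bound on its derivative
  set g : ℝ → ℝ := fun t => αhat t ^ 2 with hg
  have hgdiff : Differentiable ℝ g := by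
    have : Differentiable ℝ αhat := hαsmooth.differentiable one_ne_zero
    exact this.pow 2
  have hderivcont : Continuous (deriv g) := by
    have : ContDiff ℝ 1 g := hαsmooth.pow 2
    exact (contDiff_one_iff_deriv.mp this).2
  obtain ⟨M0, hM0⟩ := (isCompact_Icc (a := (0:ℝ)) (b := lammax)).exists_bound_of_continuousOn
    (hderivcont.continuousOn (s := Set.Icc 0 lammax))
  set M : ℝ := max M0 0 with hM
  have hMnn : 0 ≤ M := le_max_right _ _
  have hMbd : ∀ x ∈ Set.Icc (0:ℝ) lammax, ‖deriv g x‖ ≤ M :=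
    fun x hx => (hM0 x hx).trans (le_max_left _ _)
  -- MVT bound
  have hmvt : ∀ a b : ℝ, a ∈ Set.Icc (0:ℝ) lammax → b ∈ Set.Icc (0:ℝ) lammax →
      |g a - g b| ≤ M * |a - b| := by
    intro a b ha hb
    have := Convex.norm_image_sub_le_of_norm_deriv_le (f := g) (s := Set.Icc (0:ℝ) lammax)
      (fun x _ => hgdiff x) hMbd (convex_Icc _ _) hb ha
    simpa [Real.norm_eq_abs] using this
  refine ⟨Real.sqrt (K * M), ?_⟩
  intro l hl X
  have hC2 : (Real.sqrt (K * M)) ^ 2 = K * M :=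
    Real.sq_sqrt (mul_nonneg (Nat.cast_nonneg K) hMnn)
  set D : Fin N → ℝ := fun ℓ => ∑ r, βhat r (lam ℓ / 2 ^ l) with hD
  -- per-eigenvalue bound
  have hDbound : ∀ ℓ : Fin N, (D ℓ)^2 ≤ (K : ℝ) * M * lammax / 2 ^ (l + 1) := by
    intro ℓ
    have hln : (0:ℝ) ≤ lam ℓ := hlamnn ℓ
    have hmem : ∀ m : ℕ, lam ℓ / 2 ^ m ∈ Set.Icc (0:ℝ) lammax := by
      intro m
      constructor
      · positivity
      · calc lam ℓ / 2 ^ m ≤ lam ℓ := by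
              apply div_le_self hln
              exact one_le_pow₀ (by norm_num)
            _ ≤ lammax := hlammax ℓ
    have hsum : ∑ r, βhat r (lam ℓ / 2 ^ l) ^ 2 ≤ M * (lam ℓ / 2 ^ (l+1)) := by
      rw [h2scale ℓ l hl]
      have h1 := hmvt (lam ℓ / 2 ^ (l+1)) (lam ℓ / 2 ^ l) (hmem _) (hmem _)
      have key : lam ℓ / 2 ^ l - lam ℓ / 2 ^ (l+1) = lam ℓ / 2 ^ (l+1) := by
        rw [pow_succ]
        field_simp
        ring
      have habs : |lam ℓ / 2 ^ (l+1) - lam ℓ / 2 ^ l| = lam ℓ / 2 ^ (l+1) := by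
        rw [abs_sub_comm, key, abs_of_nonneg (by positivity)]
      calc αhat (lam ℓ / 2 ^ (l + 1)) ^ 2 - αhat (lam ℓ / 2 ^ l) ^ 2
          = g (lam ℓ / 2 ^ (l+1)) - g (lam ℓ / 2 ^ l) := rfl
        _ ≤ |g (lam ℓ / 2 ^ (l+1)) - g (lam ℓ / 2 ^ l)| := le_abs_self _
        _ ≤ M * |lam ℓ / 2 ^ (l+1) - lam ℓ / 2 ^ l| := h1
        _ = M * (lam ℓ / 2 ^ (l+1)) := by rw [habs]
    have hCS : (D ℓ)^2 ≤ (K:ℝ) * ∑ r, βhat r (lam ℓ / 2 ^ l) ^ 2 := by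
      have := Finset.sum_mul_sq_le_sq_mul_sq Finset.univ (fun _ : Fin K => (1:ℝ))
        (fun r => βhat r (lam ℓ / 2 ^ l))
      simpa [hD, mul_comm] using this
    calc (D ℓ)^2 ≤ (K:ℝ) * ∑ r, βhat r (lam ℓ / 2 ^ l) ^ 2 := hCS
      _ ≤ (K:ℝ) * (M * (lam ℓ / 2 ^ (l+1))) :=
          mul_le_mul_of_nonneg_left hsum (Nat.cast_nonneg K)
      _ = (K:ℝ) * M * (lam ℓ / 2 ^ (l+1)) := by ring
      _ ≤ (K:ℝ) * M * (lammax / 2 ^ (l+1)) := by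
          apply mul_le_mul_of_nonneg_left _ (mul_nonneg (Nat.cast_nonneg K) hMnn)
          have h2 : (0:ℝ) < 2 ^ (l+1) := by positivity
          exact (div_le_div_iff_of_pos_right h2).mpr (hlammax ℓ)
      _ = (K : ℝ) * M * lammax / 2 ^ (l + 1) := by ring
  -- matrix reduction
  have hdsum : ∑ r, Matrix.diagonal (fun ℓ => βhat r (lam ℓ / 2 ^ l)) = Matrix.diagonal D := by
    ext i j
    by_cases h : i = j <;> simp [Matrix.sum_apply, Matrix.diagonal_apply, h, hD]
  have hsumW : (∑ r, Whigh r l) = U * Matrix.diagonal D * Uᵀ := by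
    simp only [hWhigh]
    rw [← Matrix.sum_mul, ← Matrix.mul_sum, hdsum]
  have hLHS : (∑ r, Whigh r l * X) = U * (Matrix.diagonal D * (Uᵀ * X)) := by
    rw [← Matrix.sum_mul, hsumW]
    simp [Matrix.mul_assoc]
  rw [hLHS, frob_orth U hU.2]
  set Y := Uᵀ * X with hY
  have hYfrob : ∑ i, ∑ j, (Y i j)^2 = ∑ i, ∑ j, (X i j)^2 := by
    have := frob_orth Uᵀ (by simpa using hU.1) X
    simpa using this
  have hdiag : ∑ i, ∑ j, ((Matrix.diagonal D * Y) i j)^2 = ∑ i, (D i)^2 * ∑ j, (Y i j)^2 := by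
    simp [Matrix.diagonal_mul, mul_pow, Finset.mul_sum]
  rw [hdiag, hC2]
  calc ∑ i, (D i)^2 * ∑ j, (Y i j)^2
      ≤ ∑ i, ((K:ℝ) * M * lammax / 2 ^ (l+1)) * ∑ j, (Y i j)^2 := by
        apply Finset.sum_le_sum
        intro i _
        apply mul_le_mul_of_nonneg_right (hDbound i)
        positivity
    _ = (K:ℝ) * M * lammax / 2 ^ (l+1) * ∑ i, ∑ j, (Y i j)^2 := by
        rw [← Finset.mul_sum]
    _ = (K:ℝ) * M * lammax / 2 ^ (l+1) * ∑ i, ∑ j, (X i j)^2 := by rw [hYfrob]
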